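/- For non-negative integers N, i, j, the generating function P_{2N+1}(i,j,q) for partitions into distinct parts ≤ 2N+1 with i odd-indexed and j even-indexed odd parts equals q^{2i²−i+2j²+j}·(−q²;q²)_{N−i−j+1}·[N+1 choose i, j]_{q⁴}·(1−q^{2(N+i−j+1)})/(1−q^{4(N+1)}). -/

import Mathlib

def IsDistinctPartition (π : List ℕ) : Prop :=
  π.Chain' (· > ·) ∧ ∀ p ∈ π, 0 < p

def IsPartition (π : List ℕ) : Prop :=
  π.Chain' (· ≥ ·) ∧ ∀ p ∈ π, 0 < p

def oddIdxOdd (π : List ℕ) : ℕ :=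
  (π.zipIdx.filter fun p => p.2 % 2 == 0 && p.1 % 2 == 1).length

def evenIdxOdd (π : List ℕ) : ℕ :=
  (π.zipIdx.filter fun p => p.2 % 2 == 1 && p.1 % 2 == 1).length

def bgRank (π : List ℕ) : ℤ := (oddIdxOdd π : ℤ) - evenIdxOdd π

def altSum : List ℕ → ℤ
  | [] => 0
  | a :: t => (a : ℤ) - altSum t

noncomputable def gaussPoly : ℕ → ℕ → Polynomial ℚ
  | _, 0 => 1
  | 0, _ + 1 => 0
  | m + 1, r + 1 => gaussPoly m r + Polynomial.X ^ (r + 1) * gaussPoly m (r + 1)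

noncomputable def gaussZ (m : ℕ) (r : ℤ) : Polynomial ℚ :=
  if 0 ≤ r then gaussPoly m r.toNat else 0

noncomputable def P (N i j : ℕ) : PowerSeries ℚ :=
  PowerSeries.mk fun n =>
    (Nat.card {π : List ℕ // IsDistinctPartition π ∧ (∀ p ∈ π, p ≤ N) ∧ π.sum = n ∧
      oddIdxOdd π = i ∧ evenIdxOdd π = j} : ℚ)



open Polynomial

lemma gauss_zero (m : ℕ) : gaussPoly m 0 = 1 := by cases m <;> rfl

lemma gauss_zero_succ (r : ℕ) : gaussPoly 0 (r+1) = 0 := rfl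

lemma gauss_pascal (m r : ℕ) :
    gaussPoly (m+1) (r+1) = gaussPoly m r + X ^ (r+1) * gaussPoly m (r+1) := rfl

lemma gauss_eq_zero : ∀ {m r : ℕ}, m < r → gaussPoly m r = 0 := by
  intro m
  induction m with
  | zero => intro r h; match r, h with | (r+1), _ => rfl
  | succ m ih =>
    intro r h
    match r, h with
    | (r+1), h =>
      rw [gauss_pascal, ih (by omega), ih (by omega)]
      simp

lemma gauss_self : ∀ m : ℕ, gaussPoly m m = 1 := by
  intro m
  induction m with
  | zero => rfl
  | succ m ih => rw [gauss_pascal, ih, gauss_eq_zero (by omega)]; simp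


lemma gauss_L1 : ∀ N j : ℕ, gaussPoly (N+1) j * (1 - X^(N+1-j)) = gaussPoly N j * (1 - X^(N+1)) := by
  intro N
  induction N with
  | zero =>
    intro j
    match j with
    | 0 => simp [gauss_zero]
    | 1 => norm_num [gauss_pascal, gauss_self, gauss_zero_succ]
    | (r+2) => rw [gauss_eq_zero (by omega), gauss_eq_zero (by omega)]; ring
  | succ N ih =>
    intro j
    match j with
    | 0 => simp [gauss_zero]
    | (r+1) =>
      rcases le_or_gt r N with hr | hr
      · obtain ⟨a, rfl⟩ : ∃ a, N = r + a := ⟨N - r, by omega⟩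
        have h1 := ih r
        have h2 := ih (r+1)
        rw [show r + a + 1 - r = a + 1 from by omega] at h1
        rw [show r + a + 1 - (r+1) = a from by omega] at h2
        rw [show r + a + 1 + 1 - (r+1) = a + 1 from by omega]
        linear_combination (1 - X^(a+1)) * gauss_pascal (r+a+1) r + h1 + X^(r+1) * h2
          - ((1:Polynomial ℚ) - X^(r+a+1)) * gauss_pascal (r+a) r
      · rcases eq_or_lt_of_le (show N + 1 ≤ r from hr) with h2 | h2
        · rw [← h2, Nat.sub_self, gauss_eq_zero (show N+1 < N+1+1 from by omega)]; simp
        · rw [gauss_eq_zero (by omega), gauss_eq_zero (by omega)]; ring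

noncomputable def qfac (m : ℕ) : Polynomial ℚ := ∏ k ∈ Finset.range m, (1 - X^(k+1))

lemma qfac_succ (k : ℕ) : qfac (k+1) = qfac k * (1 - X^(k+1)) := Finset.prod_range_succ _ _

lemma qfac_ne_zero (m : ℕ) : qfac m ≠ 0 := by
  refine Finset.prod_ne_zero_iff.2 fun k _ => fun h => ?_
  have := congrArg (Polynomial.eval 0) h
  simp at this


lemma gauss_L5 : ∀ m r : ℕ, r ≤ m → gaussPoly m r * qfac r * qfac (m - r) = qfac m := by
  intro m
  induction m with
  | zero => intro r hr; interval_cases r; simp [gauss_zero, qfac]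
  | succ m ih =>
    intro r hr
    match r with
    | 0 => simp [gauss_zero, qfac]
    | (s+1) =>
      rcases le_or_gt (s+1) m with hs | hs
      · obtain ⟨c, rfl⟩ : ∃ c, m = s + c + 1 := ⟨m - s - 1, by omega⟩
        have T := ih s (by omega)
        have U := ih (s+1) hs
        rw [show s + c + 1 - s = c + 1 from by omega, qfac_succ c] at T
        rw [show s + c + 1 - (s+1) = c from by omega, qfac_succ s] at U
        rw [show s + c + 1 + 1 - (s+1) = c + 1 from by omega,
          show s + c + 1 + 1 = (s + c + 1) + 1 from rfl, qfac_succ (s+c+1)]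
        rw [qfac_succ s, qfac_succ c, qfac_succ (s+c)]
        rw [qfac_succ (s+c)] at T U
        linear_combination qfac s * (1 - X^(s+1)) * qfac c * (1 - X^(c+1)) * gauss_pascal (s+c+1) s
          + ((1:Polynomial ℚ) - X^(s+1)) * T + X^(s+1) * (1 - X^(c+1)) * U
      · have hsm : s + 1 = m + 1 := by omega
        rw [hsm, gauss_self, Nat.sub_self, one_mul]
        simp [qfac]

noncomputable def Tri (M a b : ℕ) : Polynomial ℚ := gaussPoly M a * gaussPoly (M - a) b

lemma Tri_eq_zero {M a b : ℕ} (h : M < a + b) : Tri M a b = 0 := by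
  unfold Tri
  rcases le_or_gt a M with ha | ha
  · rw [gauss_eq_zero (show M - a < b from by omega), mul_zero]
  · rw [gauss_eq_zero ha, zero_mul]

lemma Tri_symm (M a b : ℕ) : Tri M a b = Tri M b a := by
  rcases le_or_gt (a + b) M with h | h
  · have key : Tri M a b * (qfac a * qfac b * qfac (M - a - b)) =
        Tri M b a * (qfac b * qfac a * qfac (M - b - a)) := by
      unfold Tri
      calc gaussPoly M a * gaussPoly (M-a) b * (qfac a * qfac b * qfac (M - a - b))
          = (gaussPoly M a * qfac a) * (gaussPoly (M-a) b * qfac b * qfac (M - a - b)) := by ring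
        _ = (gaussPoly M a * qfac a) * qfac (M - a) := by rw [gauss_L5 (M-a) b (by omega)]
        _ = qfac M := by
              have := gauss_L5 M a (by omega); linear_combination this
        _ = (gaussPoly M b * qfac b) * qfac (M - b) := by
              rw [show gaussPoly M b * qfac b * qfac (M-b) = gaussPoly M b * qfac b * qfac (M - b) from rfl,
                gauss_L5 M b (by omega)]
        _ = gaussPoly M b * gaussPoly (M-b) a * (qfac b * qfac a * qfac (M - b - a)) := by
              rw [show M - b - a = (M - b) - a from rfl, ← gauss_L5 (M-b) a (by omega)]; ring
    have hc : (qfac a * qfac b * qfac (M - a - b)) ≠ 0 := by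
      exact mul_ne_zero (mul_ne_zero (qfac_ne_zero a) (qfac_ne_zero b)) (qfac_ne_zero _)
    rw [show M - b - a = M - a - b from by omega] at key
    exact mul_right_cancel₀ hc (by linear_combination key)
  · rw [Tri_eq_zero h, Tri_eq_zero (show M < b + a from by omega)]

lemma gauss_L2 (N i : ℕ) : gaussPoly (N+1) (i+1) * (1 - X^(i+1)) = (1 - X^(N+1)) * gaussPoly N i := by
  rcases le_or_gt i N with hi | hi
  · have hc : (qfac i * qfac (N - i)) ≠ 0 := mul_ne_zero (qfac_ne_zero i) (qfac_ne_zero _)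
    apply mul_right_cancel₀ hc
    have h1 := gauss_L5 (N+1) (i+1) (by omega)
    have h2 := gauss_L5 N i hi
    rw [show N + 1 - (i+1) = N - i from by omega, qfac_succ i] at h1
    calc gaussPoly (N+1) (i+1) * (1 - X^(i+1)) * (qfac i * qfac (N-i))
        = gaussPoly (N+1) (i+1) * (qfac i * (1 - X^(i+1))) * qfac (N-i) := by ring
      _ = qfac (N+1) := h1
      _ = qfac N * (1 - X^(N+1)) := qfac_succ N
      _ = (1 - X^(N+1)) * gaussPoly N i * (qfac i * qfac (N-i)) := by
            linear_combination (1 - X^(N+1)) * h2.symm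
  · rw [gauss_eq_zero (show N+1 < i+1 from by omega), gauss_eq_zero hi, zero_mul, mul_zero]

lemma gauss_Z0 (N i j : ℕ) :
    Tri (N+1) i j * (1 - X^(N+1-(i+j))) = Tri N i j * (1 - X^(N+1)) := by
  rcases le_or_gt i N with hi | hi
  · unfold Tri
    have e1 : N + 1 - i = (N - i) + 1 := by omega
    have h1 := gauss_L1 (N - i) j
    have h2 := gauss_L1 N i
    calc gaussPoly (N+1) i * gaussPoly (N+1-i) j * (1 - X^(N+1-(i+j)))
        = gaussPoly (N+1) i * (gaussPoly ((N-i)+1) j * (1 - X^((N-i)+1-j))) := by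
          rw [e1, show N + 1 - (i+j) = (N-i) + 1 - j from by omega]; ring
      _ = gaussPoly (N+1) i * (gaussPoly (N-i) j * (1 - X^((N-i)+1))) := by rw [h1]
      _ = (gaussPoly (N+1) i * (1 - X^(N+1-i))) * gaussPoly (N-i) j := by rw [e1]; ring
      _ = gaussPoly N i * (1 - X^(N+1)) * gaussPoly (N-i) j := by rw [h2]
      _ = gaussPoly N i * gaussPoly (N-i) j * (1 - X^(N+1)) := by ring
  · rcases eq_or_lt_of_le (show N + 1 ≤ i from hi) with h2 | h2
    · unfold Tri
      rw [← h2, Nat.sub_self, gauss_eq_zero (show N < N + 1 from by omega)]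
      rcases Nat.eq_zero_or_pos j with rfl | hj
      · simp
      · rw [gauss_eq_zero (show 0 < j from hj)]; ring
    · rw [Tri_eq_zero (by omega), Tri_eq_zero (by omega)]; ring

lemma gauss_Z1 (N i j : ℕ) :
    Tri (N+1) (i+1) j * (1 - X^(i+1)) = (1 - X^(N+1)) * Tri N j i := by
  unfold Tri
  rw [show N + 1 - (i+1) = N - i from by omega]
  calc gaussPoly (N+1) (i+1) * gaussPoly (N-i) j * (1 - X^(i+1))
      = (gaussPoly (N+1) (i+1) * (1 - X^(i+1))) * gaussPoly (N-i) j := by ring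
    _ = (1 - X^(N+1)) * gaussPoly N i * gaussPoly (N-i) j := by rw [gauss_L2]
    _ = (1 - X^(N+1)) * Tri N i j := by rw [Tri]; ring
    _ = (1 - X^(N+1)) * Tri N j i := by rw [Tri_symm]





-- cons lemmas
lemma oddIdxOdd_cons (a : ℕ) (t : List ℕ) :
    oddIdxOdd (a :: t) = (if a % 2 = 1 then 1 else 0) + evenIdxOdd t := by
  unfold oddIdxOdd evenIdxOdd
  rw [List.zipIdx_cons', List.filter_cons, List.filter_map]
  have hp : ((fun p : ℕ × ℕ => p.2 % 2 == 0 && p.1 % 2 == 1) ∘ (Prod.map id (· + 1)))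
      = (fun p : ℕ × ℕ => p.2 % 2 == 1 && p.1 % 2 == 1) := by
    funext x
    rcases x with ⟨p, k⟩
    simp only [Function.comp_apply, Prod.map_apply, id_eq]
    rcases Nat.mod_two_eq_zero_or_one k with h | h <;> simp [Nat.add_mod, h]
  rw [hp]
  rcases Nat.mod_two_eq_zero_or_one a with h | h <;>
    simp [h, List.length_map] <;> omega

lemma evenIdxOdd_cons (a : ℕ) (t : List ℕ) :
    evenIdxOdd (a :: t) = oddIdxOdd t := by
  unfold oddIdxOdd evenIdxOdd
  rw [List.zipIdx_cons', List.filter_cons, List.filter_map]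
  have hp : ((fun p : ℕ × ℕ => p.2 % 2 == 1 && p.1 % 2 == 1) ∘ (Prod.map id (· + 1)))
      = (fun p : ℕ × ℕ => p.2 % 2 == 0 && p.1 % 2 == 1) := by
    funext x
    rcases x with ⟨p, k⟩
    simp only [Function.comp_apply, Prod.map_apply, id_eq]
    rcases Nat.mod_two_eq_zero_or_one k with h | h <;> simp [Nat.add_mod, h]
  rw [hp]
  simp [List.length_map]

def DSet (M i j n : ℕ) : Set (List ℕ) :=
  {π | IsDistinctPartition π ∧ (∀ p ∈ π, p ≤ M) ∧ π.sum = n ∧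
      oddIdxOdd π = i ∧ evenIdxOdd π = j}

instance : IsAntisymm ℕ (· > ·) := ⟨fun _ _ h1 h2 => absurd h1 (not_lt_of_gt h2)⟩

lemma DSet_finite (M i j n : ℕ) : (DSet M i j n).Finite := by
  rw [← Set.finite_coe_iff]
  have hmem : ∀ x : ↥(DSet M i j n), x.1.toFinset ∈ (Finset.range (n+1)).powerset := by
    rintro ⟨π, hd, hb, hs, hrest⟩
    rw [Finset.mem_powerset]
    intro x hx
    rw [List.mem_toFinset] at hx
    have := List.single_le_sum (l := π) (fun y _ => Nat.zero_le y) x hx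
    rw [Finset.mem_range]
    omega
  refine Finite.of_injective
    (fun x => (⟨x.1.toFinset, hmem x⟩ : {s : Finset ℕ // s ∈ (Finset.range (n+1)).powerset})) ?_
  intro x y heq
  have hts : x.1.toFinset = y.1.toFinset := congrArg Subtype.val heq
  have hp₁ : x.1.Pairwise (· > ·) := List.isChain_iff_pairwise.mp x.2.1.1
  have hp₂ : y.1.Pairwise (· > ·) := List.isChain_iff_pairwise.mp y.2.1.1
  have nd₁ : x.1.Nodup := hp₁.imp fun h => Nat.ne_of_gt h
  have nd₂ : y.1.Nodup := hp₂.imp fun h => Nat.ne_of_gt h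
  have hperm := List.perm_of_nodup_nodup_toFinset_eq nd₁ nd₂ hts
  exact Subtype.ext (List.Perm.eq_of_pairwise (fun _ _ _ _ h1 h2 => absurd h1 (not_lt_of_gt h2)) hp₁ hp₂ hperm)

lemma DSet_small (M i j n : ℕ) (hn : n < M + 1) : DSet (M+1) i j n = DSet M i j n := by
  ext π
  constructor
  · rintro ⟨hd, hb, hs, ho, he⟩
    refine ⟨hd, fun p hp => ?_, hs, ho, he⟩
    have h1 := hb p hp
    have h2 := List.single_le_sum (l := π) (fun y _ => Nat.zero_le y) p hp
    omega
  · rintro ⟨hd, hb, hs, ho, he⟩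
    exact ⟨hd, fun p hp => Nat.le_succ_of_le (hb p hp), hs, ho, he⟩

lemma DSet_succ (M i j i' j' n : ℕ) (hn : M + 1 ≤ n)
    (h : ∀ t : List ℕ, (oddIdxOdd ((M+1) :: t) = i ∧ evenIdxOdd ((M+1) :: t) = j) ↔
      (oddIdxOdd t = i' ∧ evenIdxOdd t = j')) :
    DSet (M+1) i j n = DSet M i j n ∪ (List.cons (M+1)) '' DSet M i' j' (n - (M+1)) := by
  ext π
  simp only [DSet, Set.mem_union, Set.mem_image, Set.mem_setOf_eq]
  constructor
  · rintro ⟨hd, hb, hs, ho, he⟩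
    by_cases hM : ∀ p ∈ π, p ≤ M
    · left; exact ⟨hd, hM, hs, ho, he⟩
    · right
      push_neg at hM
      obtain ⟨p, hp, hpM⟩ := hM
      have hpe : p = M + 1 := le_antisymm (hb p hp) (by omega)
      subst hpe
      obtain ⟨a, t, rfl⟩ : ∃ a t, π = a :: t := by
        cases π with
        | nil => simp at hp
        | cons a t => exact ⟨a, t, rfl⟩
      have hpw : (a :: t).Pairwise (· > ·) := List.isChain_iff_pairwise.mp hd.1
      have hat : ∀ q ∈ t, a > q := (List.pairwise_cons.mp hpw).1
      have ha : a = M + 1 := by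
        rcases List.mem_cons.mp hp with h1 | h1
        · omega
        · have := hat _ h1
          have := hb a (List.mem_cons_self)
          omega
      subst ha
      refine ⟨t, ⟨⟨(List.isChain_iff_pairwise.mpr (List.pairwise_cons.mp hpw).2),
        fun q hq => hd.2 q (List.mem_cons_of_mem _ hq)⟩,
        fun q hq => by have := hat q hq; omega,
        by have : (M+1) + t.sum = n := hs; omega,
        ((h t).mp ⟨ho, he⟩).1, ((h t).mp ⟨ho, he⟩).2⟩, rfl⟩
  · rintro (⟨hd, hb, hs, ho, he⟩ | ⟨t, ⟨⟨hc, hpos⟩, hb, hs, ho, he⟩, rfl⟩)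
    · exact ⟨hd, fun p hp => Nat.le_succ_of_le (hb p hp), hs, ho, he⟩
    · refine ⟨⟨List.isChain_iff_pairwise.mpr (List.pairwise_cons.mpr
        ⟨fun q hq => by have := hb q hq; omega, List.isChain_iff_pairwise.mp hc⟩),
        fun q hq => ?_⟩, fun q hq => ?_, ?_, ((h t).mpr ⟨ho, he⟩).1, ((h t).mpr ⟨ho, he⟩).2⟩
      · rcases List.mem_cons.mp hq with rfl | h1
        · omega
        · exact hpos q h1
      · rcases List.mem_cons.mp hq with rfl | h1
        · omega
        · exact Nat.le_succ_of_le (hb q h1)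
      · have : ((M+1) :: t).sum = (M+1) + t.sum := rfl
        rw [this, hs]
        omega

lemma DSet_succ0 (M j n : ℕ) (hodd : (M+1) % 2 = 1) : DSet (M+1) 0 j n = DSet M 0 j n := by
  ext π
  constructor
  · rintro ⟨hd, hb, hs, ho, he⟩
    refine ⟨hd, fun p hp => ?_, hs, ho, he⟩
    by_contra hpM
    have hpe : p = M + 1 := le_antisymm (hb p hp) (by omega)
    subst hpe
    obtain ⟨a, t, rfl⟩ : ∃ a t, π = a :: t := by
      cases π with
      | nil => simp at hp
      | cons a t => exact ⟨a, t, rfl⟩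
    have hpw : (a :: t).Pairwise (· > ·) := List.isChain_iff_pairwise.mp hd.1
    have hat : ∀ q ∈ t, a > q := (List.pairwise_cons.mp hpw).1
    have ha : a = M + 1 := by
      rcases List.mem_cons.mp hp with h1 | h1
      · omega
      · have := hat _ h1
        have := hb a (List.mem_cons_self)
        omega
    subst ha
    rw [oddIdxOdd_cons, if_pos hodd] at ho
    omega
  · rintro ⟨hd, hb, hs, ho, he⟩
    exact ⟨hd, fun p hp => Nat.le_succ_of_le (hb p hp), hs, ho, he⟩

lemma coeffP (M i j n : ℕ) :
    PowerSeries.coeff n (P M i j) = ((DSet M i j n).ncard : ℚ) := by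
  rw [P, PowerSeries.coeff_mk]
  norm_cast

lemma card_split (M i j i' j' n : ℕ) (hn : M + 1 ≤ n)
    (h : ∀ t : List ℕ, (oddIdxOdd ((M+1) :: t) = i ∧ evenIdxOdd ((M+1) :: t) = j) ↔
      (oddIdxOdd t = i' ∧ evenIdxOdd t = j')) :
    (DSet (M+1) i j n).ncard = (DSet M i j n).ncard + (DSet M i' j' (n - (M+1))).ncard := by
  rw [DSet_succ M i j i' j' n hn h]
  have hdisj : Disjoint (DSet M i j n) ((List.cons (M+1)) '' DSet M i' j' (n - (M+1))) := by
    rw [Set.disjoint_left]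
    rintro π hπ ⟨t, _, rfl⟩
    have := hπ.2.1 (M+1) (List.mem_cons_self)
    omega
  rw [Set.ncard_union_eq hdisj (DSet_finite _ _ _ _) ((DSet_finite _ _ _ _).image _),
    Set.ncard_image_of_injective _ (List.cons_injective)]

lemma P_succ (M i j i' j' : ℕ)
    (h : ∀ t : List ℕ, (oddIdxOdd ((M+1) :: t) = i ∧ evenIdxOdd ((M+1) :: t) = j) ↔
      (oddIdxOdd t = i' ∧ evenIdxOdd t = j')) :
    P (M+1) i j = P M i j + PowerSeries.X ^ (M+1) * P M i' j' := by
  ext n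
  rw [map_add, mul_comm (PowerSeries.X ^ (M+1)), PowerSeries.coeff_mul_X_pow', coeffP, coeffP]
  by_cases hn : M + 1 ≤ n
  · rw [if_pos hn, coeffP, card_split M i j i' j' n hn h]
    push_cast
    ring
  · rw [if_neg hn, DSet_small M i j n (by omega), add_zero]

lemma P_succ_even (M i j : ℕ) (h2 : (M+1) % 2 = 0) :
    P (M+1) i j = P M i j + PowerSeries.X ^ (M+1) * P M j i := by
  refine P_succ M i j j i fun t => ?_
  rw [oddIdxOdd_cons, evenIdxOdd_cons, if_neg (by omega)]
  constructor
  · rintro ⟨h1, h3⟩; exact ⟨h3, by omega⟩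
  · rintro ⟨h1, h3⟩; exact ⟨by omega, h1⟩

lemma P_succ_odd (M i j : ℕ) (h2 : (M+1) % 2 = 1) :
    P (M+1) (i+1) j = P M (i+1) j + PowerSeries.X ^ (M+1) * P M j i := by
  refine P_succ M (i+1) j j i fun t => ?_
  rw [oddIdxOdd_cons, evenIdxOdd_cons, if_pos h2]
  constructor
  · rintro ⟨h1, h3⟩; exact ⟨h3, by omega⟩
  · rintro ⟨h1, h3⟩; exact ⟨by omega, h1⟩

lemma P_succ_odd0 (M j : ℕ) (h2 : (M+1) % 2 = 1) : P (M+1) 0 j = P M 0 j := by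
  ext n
  rw [coeffP, coeffP, DSet_succ0 M j n h2]

open PowerSeries

noncomputable def Fps (k : ℕ) : PowerSeries ℚ :=
  ∏ n ∈ Finset.range k, (1 + (PowerSeries.X : PowerSeries ℚ) ^ (2*n+2))

noncomputable def G4 (M a b : ℕ) : PowerSeries ℚ :=
  Polynomial.aeval ((PowerSeries.X : PowerSeries ℚ) ^ 4) (Tri M a b)

def Dex (i j : ℕ) : ℕ := 2*i^2 - i + 2*j^2 + j

noncomputable def Eser (N i j : ℕ) : PowerSeries ℚ :=
  PowerSeries.X ^ (Dex i j) * Fps (N - (i+j)) * G4 N i j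

noncomputable def Rser (N i j : ℕ) : PowerSeries ℚ :=
  PowerSeries.X ^ (Dex i j) * Fps (N+1 - (i+j)) * G4 (N+1) i j *
    (1 - PowerSeries.X ^ (2*(N+i+1-j))) * (1 - PowerSeries.X ^ (4*(N+1)))⁻¹

lemma Fps_succ (k : ℕ) : Fps (k+1) = Fps k * (1 + PowerSeries.X ^ (2*k+2)) :=
  Finset.prod_range_succ _ _

lemma unit_cancel {k : ℕ} (hk : 0 < k) :
    (1 - (PowerSeries.X : PowerSeries ℚ) ^ k) * (1 - PowerSeries.X ^ k)⁻¹ = 1 := by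
  apply PowerSeries.mul_inv_cancel
  simp [PowerSeries.constantCoeff_X, zero_pow (Nat.pos_iff_ne_zero.mp hk)]

lemma G4_symm (M a b : ℕ) : G4 M a b = G4 M b a := congrArg _ (Tri_symm M a b)

lemma G4_zero {M a b : ℕ} (h : M < a + b) : G4 M a b = 0 := by
  rw [G4, Tri_eq_zero h, map_zero]

lemma Z0ps (N i j : ℕ) :
    G4 (N+1) i j * (1 - PowerSeries.X ^ (4*(N+1-(i+j)))) =
      G4 N i j * (1 - PowerSeries.X ^ (4*(N+1))) := by
  have h := congrArg (Polynomial.aeval ((PowerSeries.X : PowerSeries ℚ) ^ 4)) (gauss_Z0 N i j)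
  unfold G4
  simpa [map_mul, map_sub, map_one, map_pow, Polynomial.aeval_X, ← pow_mul] using h

lemma Z1ps (N i j : ℕ) :
    G4 (N+1) (i+1) j * (1 - PowerSeries.X ^ (4*(i+1))) =
      (1 - PowerSeries.X ^ (4*(N+1))) * G4 N j i := by
  have h := congrArg (Polynomial.aeval ((PowerSeries.X : PowerSeries ℚ) ^ 4)) (gauss_Z1 N i j)
  unfold G4
  simpa [map_mul, map_sub, map_one, map_pow, Polynomial.aeval_X, ← pow_mul] using h

lemma two_sq (i : ℕ) : i ≤ 2 * i ^ 2 :=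
  le_trans (Nat.le_self_pow two_ne_zero i) (Nat.le_mul_of_pos_left (i^2) two_pos)

lemma Xpow_eq (a b c d : ℕ) (h : a + b = c + d) :
    (PowerSeries.X : PowerSeries ℚ) ^ a * PowerSeries.X ^ b =
      PowerSeries.X ^ c * PowerSeries.X ^ d := by
  rw [← pow_add, ← pow_add, h]

lemma dex1 (i j k : ℕ) : 2*(i+1+j+k)+1 + Dex j i = Dex (i+1) j + (2*k+2) := by
  have e1 := two_sq i; have e2 := two_sq j; have e3 := two_sq (i+1)
  have e4 : (i+1)^2 = i^2 + 2*i + 1 := by ring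
  unfold Dex
  rw [e4] at e3 ⊢
  obtain ⟨a, ha⟩ : ∃ a, i^2 = a := ⟨_, rfl⟩
  obtain ⟨b, hb⟩ : ∃ b, j^2 = b := ⟨_, rfl⟩
  rw [ha] at e1 e3 ⊢
  rw [hb] at e2 ⊢
  omega

lemma dex2 (i j : ℕ) : 2*(i+j)+1 + Dex j i = Dex (i+1) j := by
  have := dex1 i j 0
  omega

lemma dex3 (i j s N : ℕ) (h : N+1+i = j+s) : 2*N+2 + Dex j i = Dex i j + 2*s := by
  have e1 := two_sq i; have e2 := two_sq j
  unfold Dex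
  obtain ⟨a, ha⟩ : ∃ a, i^2 = a := ⟨_, rfl⟩
  obtain ⟨b, hb⟩ : ∃ b, j^2 = b := ⟨_, rfl⟩
  rw [ha] at e1 ⊢
  rw [hb] at e2 ⊢
  omega

lemma idI0 (N j : ℕ) : Rser N 0 j = Eser N 0 j := by
  have hu := unit_cancel (k := 4*(N+1)) (by omega)
  suffices h : PowerSeries.X ^ (Dex 0 j) * Fps (N+1 - (0+j)) * G4 (N+1) 0 j *
      (1 - PowerSeries.X ^ (2*(N+0+1-j))) =
      Eser N 0 j * (1 - PowerSeries.X ^ (4*(N+1))) by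
    calc Rser N 0 j = (PowerSeries.X ^ (Dex 0 j) * Fps (N+1 - (0+j)) * G4 (N+1) 0 j *
          (1 - PowerSeries.X ^ (2*(N+0+1-j)))) * (1 - PowerSeries.X ^ (4*(N+1)))⁻¹ := rfl
      _ = (Eser N 0 j * (1 - PowerSeries.X ^ (4*(N+1)))) * (1 - PowerSeries.X ^ (4*(N+1)))⁻¹ := by
            rw [h]
      _ = Eser N 0 j * ((1 - PowerSeries.X ^ (4*(N+1))) * (1 - PowerSeries.X ^ (4*(N+1)))⁻¹) := by
            ring
      _ = Eser N 0 j := by rw [hu, mul_one]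
  unfold Eser
  rcases le_or_gt j N with hj | hj
  · obtain ⟨k, rfl⟩ : ∃ k, N = j + k := ⟨N - j, by omega⟩
    rw [show j + k + 1 - (0+j) = k + 1 from by omega,
      show j + k - (0+j) = k from by omega,
      show 2*(j+k+0+1-j) = 2*k+2 from by omega, Fps_succ]
    have Z0 := Z0ps (j+k) 0 j
    rw [show j + k + 1 - (0+j) = k + 1 from by omega] at Z0
    linear_combination (PowerSeries.X ^ (Dex 0 j) * Fps k) * Z0
  · rcases eq_or_lt_of_le (show N + 1 ≤ j from hj) with h2 | h2
    · rw [show 2*(N+0+1-j) = 0 from by omega, pow_zero, sub_self, mul_zero,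
        G4_zero (show N < 0 + j from by omega)]
      ring
    · rw [G4_zero (show N + 1 < 0 + j from by omega),
        G4_zero (show N < 0 + j from by omega)]
      ring

lemma idII (N i j : ℕ) :
    Eser (N+1) i j = Rser N i j + PowerSeries.X ^ (2*N+2) * Rser N j i := by
  have hu := unit_cancel (k := 4*(N+1)) (by omega)
  suffices h : Eser (N+1) i j * (1 - PowerSeries.X ^ (4*(N+1))) =
      (PowerSeries.X ^ (Dex i j) * Fps (N+1 - (i+j)) * G4 (N+1) i j *
        (1 - PowerSeries.X ^ (2*(N+i+1-j))))
      + PowerSeries.X ^ (2*N+2) * (PowerSeries.X ^ (Dex j i) * Fps (N+1 - (j+i)) * G4 (N+1) j i *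
        (1 - PowerSeries.X ^ (2*(N+j+1-i)))) by
    calc Eser (N+1) i j
        = (Eser (N+1) i j * (1 - PowerSeries.X ^ (4*(N+1)))) * (1 - PowerSeries.X ^ (4*(N+1)))⁻¹ := by
          rw [mul_assoc, hu, mul_one]
      _ = _ := by rw [h, Rser, Rser]; ring
  unfold Eser
  by_cases hj : N+1+i < j
  · have h1 : G4 (N+1) i j = 0 := G4_zero (by omega)
    have h2 : G4 (N+1) j i = 0 := by rw [G4_symm]; exact h1
    rw [h1, h2]; ring
  by_cases hi : N+1+j < i
  · have h1 : G4 (N+1) i j = 0 := G4_zero (by omega)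
    have h2 : G4 (N+1) j i = 0 := by rw [G4_symm]; exact h1
    rw [h1, h2]; ring
  · obtain ⟨s, hs⟩ : ∃ s, N+1+i = j+s := ⟨N+1+i-j, by omega⟩
    obtain ⟨t, ht⟩ : ∃ t, N+1+j = i+t := ⟨N+1+j-i, by omega⟩
    rw [show 2*(N+i+1-j) = 2*s from by omega, show 2*(N+j+1-i) = 2*t from by omega,
      show N+1-(j+i) = N+1-(i+j) from by omega, G4_symm (N+1) j i,
      show 4*(N+1) = 2*s+2*t from by omega]
    have hD : (PowerSeries.X : PowerSeries ℚ) ^ (2*N+2) * PowerSeries.X ^ (Dex j i) =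
        PowerSeries.X ^ (Dex i j) * PowerSeries.X ^ (2*s) :=
      Xpow_eq _ _ _ _ (dex3 i j s N hs)
    linear_combination (-(Fps (N+1-(i+j)) * G4 (N+1) i j * (1 - PowerSeries.X ^ (2*t)))) * hD

lemma idI (N i j : ℕ) :
    Rser N (i+1) j = Eser N (i+1) j + PowerSeries.X ^ (2*N+1) * Eser N j i := by
  have hu := unit_cancel (k := 4*(N+1)) (by omega)
  suffices h : PowerSeries.X ^ (Dex (i+1) j) * Fps (N+1 - (i+1+j)) * G4 (N+1) (i+1) j *
      (1 - PowerSeries.X ^ (2*(N+(i+1)+1-j))) =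
      (Eser N (i+1) j + PowerSeries.X ^ (2*N+1) * Eser N j i) *
        (1 - PowerSeries.X ^ (4*(N+1))) by
    calc Rser N (i+1) j
        = (PowerSeries.X ^ (Dex (i+1) j) * Fps (N+1 - (i+1+j)) * G4 (N+1) (i+1) j *
          (1 - PowerSeries.X ^ (2*(N+(i+1)+1-j)))) * (1 - PowerSeries.X ^ (4*(N+1)))⁻¹ := rfl
      _ = ((Eser N (i+1) j + PowerSeries.X ^ (2*N+1) * Eser N j i) *
          (1 - PowerSeries.X ^ (4*(N+1)))) * (1 - PowerSeries.X ^ (4*(N+1)))⁻¹ := by rw [h]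
      _ = (Eser N (i+1) j + PowerSeries.X ^ (2*N+1) * Eser N j i) *
          ((1 - PowerSeries.X ^ (4*(N+1))) * (1 - PowerSeries.X ^ (4*(N+1)))⁻¹) := by ring
      _ = _ := by rw [hu, mul_one]
  unfold Eser
  rcases lt_trichotomy N (i+j) with hc | hc | hc
  · -- N+1 ≤ i+j, i.e. N+1 < i+1+j : all G4 vanish
    rw [G4_zero (show N+1 < (i+1) + j from by omega),
      G4_zero (show N < (i+1) + j from by omega),
      G4_zero (show N < j + i from by omega)]
    ring
  · -- N = i + j
    subst hc
    rw [show i + j + 1 - (i+1+j) = 0 from by omega,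
      show i + j - (i+1+j) = 0 from by omega,
      show i + j - (j+i) = 0 from by omega,
      show 2*(i+j+(i+1)+1-j) = 4*(i+1) from by omega,
      G4_zero (show i + j < (i+1) + j from by omega)]
    have Z1 := Z1ps (i+j) i j
    have hD : (PowerSeries.X : PowerSeries ℚ) ^ (2*(i+j)+1) * PowerSeries.X ^ (Dex j i) =
        PowerSeries.X ^ (Dex (i+1) j) * PowerSeries.X ^ 0 :=
      Xpow_eq _ _ _ _ (by have := dex2 i j; omega)
    linear_combination (Fps 0 * PowerSeries.X ^ (Dex (i+1) j)) * Z1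
      - (Fps 0 * G4 (i+j) j i * (1 - PowerSeries.X ^ (4*(i+j+1)))) * hD
  · -- i+1+j ≤ N
    obtain ⟨k, rfl⟩ : ∃ k, N = i + 1 + j + k := ⟨N - (i+1+j), by omega⟩
    rw [show i + 1 + j + k + 1 - (i+1+j) = k + 1 from by omega,
      show i + 1 + j + k - (i+1+j) = k from by omega,
      show i + 1 + j + k - (j+i) = k + 1 from by omega,
      show 2*(i+1+j+k+(i+1)+1-j) = (2*k+2) + 4*(i+1) from by omega,
      Fps_succ]
    have Z0 := Z0ps (i+1+j+k) (i+1) j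
    rw [show i + 1 + j + k + 1 - ((i+1)+j) = k + 1 from by omega] at Z0
    have Z1 := Z1ps (i+1+j+k) i j
    have hD : (PowerSeries.X : PowerSeries ℚ) ^ (2*(i+1+j+k)+1) * PowerSeries.X ^ (Dex j i) =
        PowerSeries.X ^ (Dex (i+1) j) * PowerSeries.X ^ (2*k+2) :=
      Xpow_eq _ _ _ _ (dex1 i j k)
    linear_combination (PowerSeries.X ^ (Dex (i+1) j) * Fps k) * Z0
      + (PowerSeries.X ^ (2*(i+1+j+k)+1) * PowerSeries.X ^ (Dex j i) *
          (1 + PowerSeries.X ^ (2*k+2)) * Fps k) * Z1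
      - (Fps k * (1 + PowerSeries.X ^ (2*k+2)) * G4 (i+1+j+k+1) (i+1) j *
          (1 - PowerSeries.X ^ (4*(i+1)))) * hD

lemma DSet_zero (i j n : ℕ) :
    DSet 0 i j n = if n = 0 ∧ i = 0 ∧ j = 0 then {([] : List ℕ)} else (∅ : Set (List ℕ)) := by
  ext π
  constructor
  · rintro ⟨hd, hb, hs, ho, he⟩
    have hnil : π = [] := by
      cases π with
      | nil => rfl
      | cons a t =>
        have h1 := hb a (List.mem_cons_self)
        have h2 := hd.2 a (List.mem_cons_self)
        omega
    subst hnil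
    rw [if_pos ⟨by simpa using hs.symm, by simpa [oddIdxOdd] using ho.symm, by simpa [evenIdxOdd] using he.symm⟩]
    rfl
  · intro hπ
    split_ifs at hπ with hc
    · obtain ⟨rfl, rfl, rfl⟩ := hc
      have : π = [] := hπ
      subst this
      exact ⟨⟨List.isChain_nil, by simp⟩, by simp, rfl, rfl, rfl⟩
    · exact absurd hπ (Set.notMem_empty π)

lemma P_base (i j : ℕ) : P 0 i j = Eser 0 i j := by
  match i, j with
  | 0, 0 =>
    have hE : Eser 0 0 0 = 1 := by
      unfold Eser Fps G4 Tri Dex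
      simp [gauss_zero]
    rw [hE]
    ext n
    rw [coeffP, DSet_zero, PowerSeries.coeff_one]
    rcases Nat.eq_zero_or_pos n with rfl | hn
    · simp
    · rw [if_neg (by omega), if_neg (by omega)]
      simp
  | (a+1), j =>
    have hE : Eser 0 (a+1) j = 0 := by
      unfold Eser
      rw [G4_zero (show 0 < (a+1) + j from by omega)]
      ring
    rw [hE]
    ext n
    rw [coeffP, DSet_zero, if_neg (by omega), map_zero]
    simp
  | 0, (b+1) =>
    have hE : Eser 0 0 (b+1) = 0 := by
      unfold Eser
      rw [G4_zero (show 0 < 0 + (b+1) from by omega)]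
      ring
    rw [hE]
    ext n
    rw [coeffP, DSet_zero, if_neg (by omega), map_zero]
    simp

lemma odd_step (N : ℕ) (he : ∀ i j, P (2*N) i j = Eser N i j) :
    ∀ i j, P (2*N+1) i j = Rser N i j := by
  intro i j
  match i with
  | 0 =>
    rw [show 2*N+1 = (2*N)+1 from rfl, P_succ_odd0 (2*N) j (by omega), he, idI0]
  | (a+1) =>
    rw [show 2*N+1 = (2*N)+1 from rfl, P_succ_odd (2*N) a j (by omega), he, he, ← idI]

lemma even_step (N : ℕ) (ho : ∀ i j, P (2*N+1) i j = Rser N i j) :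
    ∀ i j, P (2*N+2) i j = Eser (N+1) i j := by
  intro i j
  rw [show 2*N+2 = (2*N+1)+1 from rfl, P_succ_even (2*N+1) i j (by omega), ho, ho, ← idII]

lemma both_steps : ∀ N : ℕ, (∀ i j, P (2*N) i j = Eser N i j) ∧
    (∀ i j, P (2*N+1) i j = Rser N i j) := by
  intro N
  induction N with
  | zero =>
    have hb : ∀ i j, P (2*0) i j = Eser 0 i j := fun i j => P_base i j
    exact ⟨hb, odd_step 0 hb⟩
  | succ N ih =>
    have he : ∀ i j, P (2*(N+1)) i j = Eser (N+1) i j := by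
      intro i j
      rw [show 2*(N+1) = 2*N+2 from by ring]
      exact even_step N ih.2 i j
    exact ⟨he, odd_step (N+1) he⟩


theorem stmt3 (N i j : ℕ) :
    P (2 * N + 1) i j =
      PowerSeries.X ^ (2 * i ^ 2 - i + 2 * j ^ 2 + j) *
        (∏ n ∈ Finset.range (N + 1 - i - j), (1 + PowerSeries.X ^ (2 * n + 2))) *
        Polynomial.aeval (PowerSeries.X ^ 4 : PowerSeries ℚ)
          (gaussPoly (N + 1) i * gaussPoly (N + 1 - i) j) *
        (1 - PowerSeries.X ^ (2 * (N + i + 1 - j))) *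
        (1 - PowerSeries.X ^ (4 * (N + 1)))⁻¹ := by
  rw [(both_steps N).2 i j]
  unfold Rser Fps G4 Tri Dex
  rw [Nat.sub_sub (N+1) i j]
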